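/- For any arithmetic progression of natural numbers with common difference d ≥ 1, i.e., T(n) = a + n·d, there is no index M such that T(n) has an even number of decimal digits for all n ≥ M. Equivalently, the progression has terms with an odd number of decimal digits infinitely often. -/

import Mathlib

theorem stmt_5 (a d : ℕ) (ha : 1 ≤ a) (hd : 1 ≤ d) :
    ¬ ∃ M : ℕ, ∀ n : ℕ, M ≤ n → Even (Nat.digits 10 (a + n * d)).length := by
  rintro ⟨M, hM⟩
  set e := 2 * (a + M * d + d) with he
  have he1 : a + M * d < 10 ^ e := by
    calc a + M * d < e := by omega
    _ < 10 ^ e := Nat.lt_pow_self (by norm_num)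
  have hd1 : d < 10 ^ e := by
    calc d < e := by omega
    _ < 10 ^ e := Nat.lt_pow_self (by norm_num)
  have hex : ∃ n, 10 ^ e ≤ a + n * d := ⟨10 ^ e, by nlinarith⟩
  set n := Nat.find hex with hn
  have hspec : 10 ^ e ≤ a + n * d := Nat.find_spec hex
  have hMn : M < n := by
    by_contra h
    push_neg at h
    have : a + n * d ≤ a + M * d := by
      have := Nat.mul_le_mul_right d h
      omega
    omega
  have hn0 : 0 < n := by omega
  have hmin : ¬ 10 ^ e ≤ a + (n - 1) * d := Nat.find_min hex (by omega)
  have hub : a + n * d < 10 ^ (e + 1) := by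
    obtain ⟨m, hm⟩ : ∃ m, n = m + 1 := ⟨n - 1, by omega⟩
    have h1 : a + n * d = a + (n - 1) * d + d := by
      rw [hm]; simp; ring
    have : a + n * d < 10 ^ e + 10 ^ e := by omega
    calc a + n * d < 10 ^ e + 10 ^ e := this
    _ ≤ 10 ^ (e + 1) := by rw [pow_succ]; omega
  have hlen : (Nat.digits 10 (a + n * d)).length = e + 1 := by
    rw [Nat.digits_len 10 _ (by norm_num) (by omega)]
    rw [Nat.log_eq_of_pow_le_of_lt_pow hspec hub]
  have := hM n (by omega)
  rw [hlen] at this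
  simp [Nat.even_add_one, he, Nat.even_mul] at this
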